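/- Let V be a finite type and Q : Matrix V V ℕ. Suppose there is a permutation σ of V with P_σ * Q = Q * P_σ and Qᵀ = P_σ * Q, and suppose the spectral radius of Q (regarded as a complex matrix) is 2. Then there exist a symmetric matrix H : Matrix (V ⊕ V) (V ⊕ V) ℕ and a permutation τ of V ⊕ V with P_τ * H = H * P_τ, such that Matrix.fromBlocks Q 0 0 Q = P_τ * H and the spectral radius of H (regarded as a complex matrix) is 2. That is, Q is a pretzelization of a graph of spectral radius 2. -/

import Mathlib

open Matrix

/-- The permutation matrix of a permutation `σ`: `(P_σ) i j = 1` if `j = σ i`, else `0`. -/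
def permMat {V : Type*} [DecidableEq V] (R : Type*) [Zero R] [One R]
    (σ : Equiv.Perm V) : Matrix V V R :=
  Matrix.of fun i j => if j = σ i then 1 else 0

section permMatAux

set_option linter.unusedSectionVars false

variable {V : Type*} [Fintype V] [DecidableEq V] {R : Type*} [Semiring R]

lemma permMat_mul_aux (σ : Equiv.Perm V) (M : Matrix V V R) :
    permMat R σ * M = M.submatrix σ id := by
  ext i j
  simp [permMat, Matrix.mul_apply]

lemma mul_permMat_aux (σ : Equiv.Perm V) (M : Matrix V V R) :
    M * permMat R σ = M.submatrix id σ.symm := by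
  ext i j
  have h : ∀ k : V, (j = σ k) ↔ (k = σ.symm j) := fun k => by
    rw [eq_comm, Equiv.eq_symm_apply, eq_comm]
  simp [permMat, Matrix.mul_apply, h]

lemma permMat_one_aux : permMat R (1 : Equiv.Perm V) = 1 := by
  ext i j
  simp [permMat, Matrix.one_apply, eq_comm]

lemma permMat_mul_permMat_aux (σ ρ : Equiv.Perm V) :
    permMat R σ * permMat R ρ = permMat R (ρ * σ) := by
  rw [permMat_mul_aux]
  ext i j
  simp [permMat]
  split_ifs <;> simp_all [Equiv.Perm.mul_apply]

lemma permMat_pow_aux (τ : Equiv.Perm V) (n : ℕ) :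
    (permMat R τ) ^ n = permMat R (τ ^ n) := by
  induction n with
  | zero => simp [permMat_one_aux]
  | succ n ih => rw [pow_succ, ih, permMat_mul_permMat_aux, ← pow_succ']

lemma permMat_map_aux {S : Type*} [Semiring S] (σ : Equiv.Perm V) (f : R →+* S) :
    (permMat R σ).map f = permMat S σ := by
  ext i j
  simp only [permMat, Matrix.map_apply, Matrix.of_apply]
  split <;> simp

/-- The pretzelization permutation on `V ⊕ V`. -/
def pretzTau (σ : Equiv.Perm V) : Equiv.Perm (V ⊕ V) :=
  (Equiv.sumCongr σ⁻¹ (Equiv.refl V)).trans (Equiv.sumComm V V)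

lemma pretzTau_inl (σ : Equiv.Perm V) (v : V) :
    pretzTau σ (Sum.inl v) = Sum.inr (σ⁻¹ v) := rfl

lemma pretzTau_inr (σ : Equiv.Perm V) (v : V) :
    pretzTau σ (Sum.inr v) = Sum.inl v := rfl

lemma pretzTau_symm_inl (σ : Equiv.Perm V) (v : V) :
    (pretzTau σ).symm (Sum.inl v) = Sum.inr v := rfl

lemma pretzTau_symm_inr (σ : Equiv.Perm V) (v : V) :
    (pretzTau σ).symm (Sum.inr v) = Sum.inl (σ v) := rfl

lemma pretzel_rel (Q : Matrix V V R) (σ : Equiv.Perm V)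
    (hop : Qᵀ = permMat R σ * Q) : ∀ i j, Q j i = Q (σ i) j := by
  intro i j
  have := congrFun (congrFun hop i) j
  rw [permMat_mul_aux] at this
  simpa using this

lemma pretzel_eq (Q : Matrix V V R) (σ : Equiv.Perm V)
    (hop : Qᵀ = permMat R σ * Q) :
    Matrix.fromBlocks Q 0 0 Q = permMat R (pretzTau σ) * Matrix.fromBlocks 0 Q Qᵀ 0 := by
  have hrel := pretzel_rel Q σ hop
  rw [permMat_mul_aux]
  ext i j
  rcases i with i | i <;> rcases j with j | j <;>
    simp [Matrix.submatrix_apply, pretzTau_inl, pretzTau_inr, Matrix.fromBlocks]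
  simpa using (hrel (σ⁻¹ i) j).symm

lemma pretzel_comm (Q : Matrix V V R) (σ : Equiv.Perm V)
    (hop : Qᵀ = permMat R σ * Q) :
    permMat R (pretzTau σ) * Matrix.fromBlocks 0 Q Qᵀ 0 =
      Matrix.fromBlocks 0 Q Qᵀ 0 * permMat R (pretzTau σ) := by
  have hrel := pretzel_rel Q σ hop
  rw [permMat_mul_aux, mul_permMat_aux]
  ext i j
  rcases i with i | i <;> rcases j with j | j <;>
    simp [Matrix.submatrix_apply, pretzTau_inl, pretzTau_inr, pretzTau_symm_inl,
      pretzTau_symm_inr, Matrix.fromBlocks]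
  · simpa using hrel (σ⁻¹ i) j
  · exact hrel j i

lemma pretzTau_pow_eq_one (σ : Equiv.Perm V) :
    pretzTau σ ^ (2 * orderOf σ) = 1 := by
  have h2 : pretzTau σ ^ 2 = Equiv.sumCongr σ⁻¹ σ⁻¹ := by
    ext x
    rcases x with v | v <;>
      simp [pow_succ, Equiv.Perm.mul_apply, pretzTau_inl, pretzTau_inr]
  have hmono : Equiv.sumCongr σ⁻¹ σ⁻¹ = Equiv.Perm.sumCongrHom V V (σ⁻¹, σ⁻¹) := rfl
  rw [pow_mul, h2, hmono, ← map_pow]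
  have : ((σ⁻¹, σ⁻¹) : Equiv.Perm V × Equiv.Perm V) ^ orderOf σ = 1 := by
    ext <;> simp [inv_pow, pow_orderOf_eq_one]
  rw [this, _root_.map_one]

end permMatAux

section specAux

variable {m : Type*} [Fintype m] [DecidableEq m]

lemma spectrum_fromBlocks_diag_aux (A : Matrix m m ℂ) :
    spectrum ℂ (Matrix.fromBlocks A 0 0 A) = spectrum ℂ A := by
  ext z
  rw [spectrum.mem_iff, spectrum.mem_iff, not_iff_not,
    Matrix.isUnit_iff_isUnit_det, Matrix.isUnit_iff_isUnit_det]
  have : algebraMap ℂ (Matrix (m ⊕ m) (m ⊕ m) ℂ) z - Matrix.fromBlocks A 0 0 A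
      = Matrix.fromBlocks (algebraMap ℂ (Matrix m m ℂ) z - A) 0 0
        (algebraMap ℂ (Matrix m m ℂ) z - A) := by
    rw [Algebra.algebraMap_eq_smul_one, Algebra.algebraMap_eq_smul_one,
      ← Matrix.fromBlocks_one, Matrix.fromBlocks_smul, sub_eq_add_neg,
      Matrix.fromBlocks_neg, Matrix.fromBlocks_add]
    simp [sub_eq_add_neg]
  rw [this, Matrix.det_fromBlocks_zero₁₂, IsUnit.mul_iff, and_self]

lemma spectralRadius_pow_aux [Nonempty m] (A : Matrix m m ℂ) {n : ℕ} (hn : 0 < n) :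
    spectralRadius ℂ (A ^ n) = (spectralRadius ℂ A) ^ n := by
  have hs : spectrum ℂ (A ^ n) = (· ^ n) '' spectrum ℂ A := spectrum.map_pow_of_pos A hn
  obtain ⟨k₀, hk₀, hmax⟩ := Set.exists_max_image (spectrum ℂ A) (fun k => ‖k‖₊)
    (Matrix.finite_spectrum A)
    (spectrum.nonempty_of_isAlgClosed_of_finiteDimensional ℂ A)
  have h1 : spectralRadius ℂ A = (‖k₀‖₊ : ENNReal) :=
    le_antisymm (iSup₂_le fun k hk => ENNReal.coe_le_coe.2 (hmax k hk))
      (le_iSup₂ (f := fun k (_ : k ∈ spectrum ℂ A) => (‖k‖₊ : ENNReal)) k₀ hk₀)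
  have h2 : spectralRadius ℂ (A ^ n) = (‖k₀‖₊ : ENNReal) ^ n := by
    apply le_antisymm
    · apply iSup₂_le
      intro k hk
      rw [hs] at hk
      obtain ⟨w, hw, rfl⟩ := hk
      calc (‖w ^ n‖₊ : ENNReal) = (‖w‖₊ : ENNReal) ^ n := by
            rw [nnnorm_pow, ENNReal.coe_pow]
        _ ≤ (‖k₀‖₊ : ENNReal) ^ n := by
            gcongr
            exact_mod_cast hmax w hw
    · have hmem : k₀ ^ n ∈ spectrum ℂ (A ^ n) := hs ▸ ⟨k₀, hk₀, rfl⟩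
      calc (‖k₀‖₊ : ENNReal) ^ n = (‖k₀ ^ n‖₊ : ENNReal) := by
            rw [nnnorm_pow, ENNReal.coe_pow]
        _ ≤ spectralRadius ℂ (A ^ n) :=
            le_iSup₂ (f := fun k (_ : k ∈ spectrum ℂ (A ^ n)) => (‖k‖₊ : ENNReal)) _ hmem
  rw [h1, h2]

end specAux

/-- If `Q^op = ^σQ` for some automorphism `σ` of `Q` and the spectral radius of `Q` is `2`,
then `Q` is a pretzelization of a graph of spectral radius `2`: the disjoint union `Q ∪ Q`
is the twist, by an automorphism `τ`, of a symmetric matrix `H` of spectral radius `2`. -/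
theorem pretzelization_of_spectralRadius_two
    {V : Type*} [Fintype V] [DecidableEq V] (Q : Matrix V V ℕ)
    (σ : Equiv.Perm V)
    (hcomm : permMat ℕ σ * Q = Q * permMat ℕ σ)
    (hop : Qᵀ = permMat ℕ σ * Q)
    (hρ : spectralRadius ℂ (Q.map (fun x => (x : ℂ))) = 2) :
    ∃ (H : Matrix (V ⊕ V) (V ⊕ V) ℕ) (τ : Equiv.Perm (V ⊕ V)),
      Hᵀ = H ∧ permMat ℕ τ * H = H * permMat ℕ τ ∧
      Matrix.fromBlocks Q 0 0 Q = permMat ℕ τ * H ∧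
      spectralRadius ℂ (H.map (fun x => (x : ℂ))) = 2 := by
  classical
  refine ⟨Matrix.fromBlocks 0 Q Qᵀ 0, pretzTau σ, ?_, pretzel_comm Q σ hop,
    pretzel_eq Q σ hop, ?_⟩
  · rw [Matrix.fromBlocks_transpose]
    simp
  · -- spectral radius part
    rcases isEmpty_or_nonempty V with hV | hV
    · exfalso
      haveI : Subsingleton (Matrix V V ℂ) :=
        ⟨fun a b => by ext i j; exact (hV.false i).elim⟩
      have hspec : spectrum ℂ (Q.map (fun x : ℕ => (x : ℂ))) = ∅ := by
        ext z
        simp [spectrum.mem_iff, isUnit_of_subsingleton]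
      have h0 : spectralRadius ℂ (Q.map (fun x : ℕ => (x : ℂ))) = 0 := by
        simp [spectralRadius, hspec]
      rw [hρ] at h0
      exact (by norm_num : (2 : ENNReal) ≠ 0) h0
    · set Qc : Matrix V V ℂ := Q.map (Nat.castRingHom ℂ) with hQc
      have hopC : Qcᵀ = permMat ℂ σ * Qc := by
        have h := congrArg (fun M => M.map (Nat.castRingHom ℂ)) hop
        simpa only [Matrix.map_mul, permMat_map_aux, Matrix.transpose_map] using h
      set Hc : Matrix (V ⊕ V) (V ⊕ V) ℂ := Matrix.fromBlocks 0 Qc Qcᵀ 0 with hHc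
      have hmapH : (Matrix.fromBlocks 0 Q Qᵀ 0).map (fun x : ℕ => (x : ℂ)) = Hc := by
        rw [hHc]
        have : (Matrix.fromBlocks 0 Q Qᵀ 0).map (fun x : ℕ => (x : ℂ)) =
            Matrix.fromBlocks ((0 : Matrix V V ℕ).map (fun x : ℕ => (x : ℂ)))
              (Q.map (fun x : ℕ => (x : ℂ))) (Qᵀ.map (fun x : ℕ => (x : ℂ)))
              ((0 : Matrix V V ℕ).map (fun x : ℕ => (x : ℂ))) :=
          Matrix.fromBlocks_map _ _ _ _ _
        rw [this, Matrix.transpose_map]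
        congr 1 <;> ext i j <;> simp [hQc]
      set n : ℕ := 2 * orderOf σ with hn'
      have hn : 0 < n := by
        have := orderOf_pos σ
        omega
      have hτn : pretzTau σ ^ n = 1 := pretzTau_pow_eq_one σ
      have hDc : Matrix.fromBlocks Qc 0 0 Qc = permMat ℂ (pretzTau σ) * Hc :=
        pretzel_eq Qc σ hopC
      have hcommc : permMat ℂ (pretzTau σ) * Hc = Hc * permMat ℂ (pretzTau σ) :=
        pretzel_comm Qc σ hopC
      have hpow : (Matrix.fromBlocks Qc 0 0 Qc) ^ n = Hc ^ n := by
        rw [hDc, Commute.mul_pow hcommc, permMat_pow_aux, hτn, permMat_one_aux, one_mul]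
      have hρQc : spectralRadius ℂ Qc = 2 := hρ
      have h1 : spectralRadius ℂ (Matrix.fromBlocks Qc 0 0 Qc) = 2 := by
        have : spectralRadius ℂ (Matrix.fromBlocks Qc 0 0 Qc)
            = ⨆ k ∈ spectrum ℂ (Matrix.fromBlocks Qc 0 0 Qc), (‖k‖₊ : ENNReal) := rfl
        rw [this, spectrum_fromBlocks_diag_aux]
        exact hρQc
      haveI : Nonempty (V ⊕ V) := ⟨Sum.inl hV.some⟩
      have h2 : spectralRadius ℂ Hc ^ n = (2 : ENNReal) ^ n := by
        rw [← spectralRadius_pow_aux Hc hn, ← hpow, spectralRadius_pow_aux _ hn, h1]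
      have hfinal : spectralRadius ℂ Hc = 2 := by
        rcases lt_trichotomy (spectralRadius ℂ Hc) 2 with h | h | h
        · exact absurd h2 (ne_of_lt (ENNReal.pow_lt_pow_left hn.ne' h))
        · exact h
        · exact absurd h2.symm (ne_of_lt (ENNReal.pow_lt_pow_left hn.ne' h))
      rw [hmapH]
      exact hfinal
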